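/- In dimension n = 1, the symbol of the Hilbert transform under the Bargmann correspondence satisfies the ODE φ'(z) = (2/π)^{1/2} e^{z²/2} with φ(0) = 0, where φ(z) = (2/π)^{1/2} ∫_ℝ (-i·sgn(x)) e^{-2(x - (i/2)z)²} dx; consequently φ(z) = (2/√π) A(z/√2), where A(z) = ∫₀^z e^{u²} du. -/

import Mathlib

open MeasureTheory Complex Filter Set Metric Topology

private lemma measurable_realSign : Measurable Real.sign := by
  have h : Real.sign = fun r : ℝ => if r < 0 then (-1:ℝ) else if 0 < r then 1 else 0 := rfl
  rw [h]
  exact Measurable.ite measurableSet_Iio measurable_const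
    (Measurable.ite measurableSet_Ioi measurable_const measurable_const)

private lemma abs_sign_le (x : ℝ) : |Real.sign x| ≤ 1 := by
  rcases Real.sign_apply_eq x with h | h | h <;> simp [h]

private lemma normE (s : ℂ) (x : ℝ) :
    ‖Complex.exp (-2*((x:ℂ) - s)^2)‖ = Real.exp (-(2*(x - s.re)^2) + 2*s.im^2) := by
  rw [Complex.norm_exp]
  congr 1
  simp [pow_two, Complex.mul_re, Complex.sub_re, Complex.sub_im]
  ring

private lemma key_bound {c : ℝ} (hc : 1 ≤ c) {s : ℂ} (hs : ‖s‖ ≤ c) (x : ℝ) :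
    (2*‖(x:ℂ) - s‖) * ‖Complex.exp (-2*((x:ℂ) - s)^2)‖
      ≤ (2 + 2*c) * Real.exp (10*c^2) * Real.exp (-x^2) := by
  have hre : |s.re| ≤ c := le_trans (Complex.abs_re_le_norm s) hs
  have him : |s.im| ≤ c := le_trans (Complex.abs_im_le_norm s) hs
  have hre2 : s.re^2 ≤ c^2 := by nlinarith [abs_nonneg s.re, _root_.sq_abs s.re]
  have him2 : s.im^2 ≤ c^2 := by nlinarith [abs_nonneg s.im, _root_.sq_abs s.im]
  have hx1 : |x| ≤ Real.exp (x^2/2) := by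
    nlinarith [Real.add_one_le_exp (x^2/2), _root_.sq_abs x, sq_nonneg (|x| - 1)]
  have hnorm : 2*‖(x:ℂ) - s‖ ≤ (2 + 2*c) * Real.exp (x^2/2) := by
    have h1 : ‖(x:ℂ) - s‖ ≤ |x| + c := by
      calc ‖(x:ℂ) - s‖ ≤ ‖(x:ℂ)‖ + ‖s‖ := norm_sub_le _ _
      _ ≤ |x| + c := by rw [Complex.norm_real, Real.norm_eq_abs]; linarith
    have h3 : (1:ℝ) ≤ Real.exp (x^2/2) := Real.one_le_exp (by positivity)
    nlinarith
  have hexp : ‖Complex.exp (-2*((x:ℂ) - s)^2)‖ ≤ Real.exp (-(3/2)*x^2 + 10*c^2) := by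
    rw [normE]
    apply Real.exp_le_exp.2
    nlinarith [sq_nonneg (|x| - 4*c), abs_nonneg x, _root_.sq_abs x,
      le_abs_self (s.re * x), abs_mul s.re x, mul_le_mul_of_nonneg_right hre (abs_nonneg x)]
  calc (2*‖(x:ℂ) - s‖) * ‖Complex.exp (-2*((x:ℂ) - s)^2)‖
      ≤ ((2 + 2*c) * Real.exp (x^2/2)) * Real.exp (-(3/2)*x^2 + 10*c^2) := by
        apply mul_le_mul hnorm hexp (norm_nonneg _) (by positivity)
    _ = (2 + 2*c) * Real.exp (10*c^2) * Real.exp (-x^2) := by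
        rw [mul_assoc, ← Real.exp_add, mul_assoc, ← Real.exp_add]; ring_nf

private lemma key_bound' {c : ℝ} (hc : 1 ≤ c) {s : ℂ} (hs : ‖s‖ ≤ c) (x : ℝ) :
    ‖Complex.exp (-2*((x:ℂ) - s)^2)‖ ≤ (2 + 2*c) * Real.exp (10*c^2) * Real.exp (-x^2) := by
  have hre : |s.re| ≤ c := le_trans (Complex.abs_re_le_norm s) hs
  have him : |s.im| ≤ c := le_trans (Complex.abs_im_le_norm s) hs
  have hre2 : s.re^2 ≤ c^2 := by nlinarith [abs_nonneg s.re, _root_.sq_abs s.re]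
  have him2 : s.im^2 ≤ c^2 := by nlinarith [abs_nonneg s.im, _root_.sq_abs s.im]
  rw [normE]
  have h1 : Real.exp (-(2*(x - s.re)^2) + 2*s.im^2) ≤ Real.exp (-x^2 + 10*c^2) := by
    apply Real.exp_le_exp.2
    nlinarith [sq_nonneg (|x| - 4*c), abs_nonneg x, _root_.sq_abs x,
      le_abs_self (s.re * x), abs_mul s.re x, mul_le_mul_of_nonneg_right hre (abs_nonneg x)]
  calc Real.exp (-(2*(x - s.re)^2) + 2*s.im^2) ≤ Real.exp (-x^2 + 10*c^2) := h1
    _ = Real.exp (10*c^2) * Real.exp (-x^2) := by rw [← Real.exp_add]; ring_nf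
    _ ≤ (2 + 2*c) * Real.exp (10*c^2) * Real.exp (-x^2) := by nlinarith [mul_pos (Real.exp_pos (10*c^2)) (Real.exp_pos (-x^2))]

private lemma integrable_bound (K : ℝ) : Integrable (fun x : ℝ => K * Real.exp (-x^2)) := by
  have h := (integrable_exp_neg_mul_sq (one_pos)).const_mul K
  simpa using h

-- derivative in z of the integrand, for fixed x
private lemma hasDeriv_in_z (x : ℝ) (z : ℂ) :
    HasDerivAt (fun z : ℂ => (-Complex.I*(Real.sign x:ℂ)) * Complex.exp (-2*((x:ℂ) - Complex.I/2*z)^2))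
      ((-Complex.I*(Real.sign x:ℂ)) * Complex.exp (-2*((x:ℂ) - Complex.I/2*z)^2)
        * (2*Complex.I*((x:ℂ) - Complex.I/2*z))) z := by
  have h1 : HasDerivAt (fun z : ℂ => (x:ℂ) - Complex.I/2*z) (-(Complex.I/2)) z := by
    simpa using ((hasDerivAt_id z).const_mul (Complex.I/2)).const_sub (x:ℂ)
  have h5 := ((((h1.pow 2).const_mul (-2 : ℂ)).cexp).const_mul (-Complex.I*(Real.sign x:ℂ)))
  refine h5.congr_deriv ?_
  simp only [Pi.pow_apply, id_eq, Nat.cast_ofNat, show (2:ℕ) - 1 = 1 from rfl, pow_one]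
  ring

-- derivative in (real) x of the antiderivative g
private lemma hasDeriv_g (s : ℂ) (x : ℝ) :
    HasDerivAt (fun x : ℝ => -(1/2) * Complex.exp (-2*((x:ℂ) - s)^2))
      (2*((x:ℂ)-s) * Complex.exp (-2*((x:ℂ)-s)^2)) x := by
  have h : HasDerivAt (fun u : ℂ => -(1/2)*Complex.exp (-2*(u-s)^2))
      (2*((x:ℂ)-s) * Complex.exp (-2*((x:ℂ)-s)^2)) (x:ℂ) := by
    have h2 := ((((hasDerivAt_id (x:ℂ)).sub_const s).pow 2).const_mul (-2:ℂ)).cexp.const_mul (-(1/2):ℂ)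
    refine h2.congr_deriv ?_
    simp only [Pi.pow_apply, id_eq, Nat.cast_ofNat, show (2:ℕ) - 1 = 1 from rfl, pow_one]
    ring
  exact h.comp_ofReal

private lemma normE' (s : ℂ) (x : ℝ) :
    ‖Complex.exp (-2*((x:ℂ) - s)^2)‖ = Real.exp (-(2*(x - s.re)^2) + 2*s.im^2) := by
  rw [Complex.norm_exp]
  congr 1
  simp [pow_two, Complex.mul_re, Complex.sub_re, Complex.sub_im]
  ring

private lemma norm_g (s : ℂ) (x : ℝ) :
    ‖-(1/2) * Complex.exp (-2*((x:ℂ) - s)^2)‖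
      ≤ (1/2) * Real.exp (-(2*(x - s.re)^2) + 2*s.im^2) := by
  rw [norm_mul, normE' s x]
  norm_num

private lemma exp_arg_tendsto_top (s : ℂ) :
    Tendsto (fun x : ℝ => -(2*(x - s.re)^2) + 2*s.im^2) atTop atBot := by
  apply tendsto_atBot_add_const_right
  have h2 : Tendsto (fun x : ℝ => (x - s.re)^2) atTop atTop := by
    have := (tendsto_pow_atTop (n := 2) two_ne_zero).comp
      (tendsto_atTop_add_const_right atTop (-s.re) tendsto_id)
    simpa [Function.comp_def, sub_eq_add_neg] using this
  have h3 := h2.const_mul_atTop (show (0:ℝ) < 2 by norm_num)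
  have h5 : (fun x : ℝ => -(2*(x - s.re)^2)) = Neg.neg ∘ (fun x : ℝ => 2*(x - s.re)^2) := rfl
  rw [h5]
  exact tendsto_neg_atTop_atBot.comp h3

private lemma exp_arg_tendsto_bot (s : ℂ) :
    Tendsto (fun x : ℝ => -(2*(x - s.re)^2) + 2*s.im^2) atBot atBot := by
  apply tendsto_atBot_add_const_right
  have h2 : Tendsto (fun x : ℝ => (x - s.re)^2) atBot atTop := by
    have h4 : Tendsto (fun x : ℝ => s.re - x) atBot atTop := by
      apply tendsto_atTop_add_const_left
      exact tendsto_neg_atBot_atTop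
    have := (tendsto_pow_atTop (n := 2) two_ne_zero).comp h4
    have heq : (fun x : ℝ => (x - s.re)^2) = fun x : ℝ => (s.re - x)^2 := by
      funext x; ring
    rw [heq]
    simpa [Function.comp_def] using this
  have h3 := h2.const_mul_atTop (show (0:ℝ) < 2 by norm_num)
  have h5 : (fun x : ℝ => -(2*(x - s.re)^2)) = Neg.neg ∘ (fun x : ℝ => 2*(x - s.re)^2) := rfl
  rw [h5]
  exact tendsto_neg_atTop_atBot.comp h3

private lemma tendsto_g_top (s : ℂ) :
    Tendsto (fun x : ℝ => -(1/2) * Complex.exp (-2*((x:ℂ) - s)^2)) atTop (𝓝 0) := by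
  have hb : Tendsto (fun x : ℝ => (1/2) * Real.exp (-(2*(x - s.re)^2) + 2*s.im^2)) atTop (𝓝 0) := by
    have := (Real.tendsto_exp_atBot.comp (exp_arg_tendsto_top s)).const_mul (1/2 : ℝ)
    simpa using this
  exact squeeze_zero_norm (fun x => norm_g s x) hb

private lemma tendsto_g_bot (s : ℂ) :
    Tendsto (fun x : ℝ => -(1/2) * Complex.exp (-2*((x:ℂ) - s)^2)) atBot (𝓝 0) := by
  have hb : Tendsto (fun x : ℝ => (1/2) * Real.exp (-(2*(x - s.re)^2) + 2*s.im^2)) atBot (𝓝 0) := by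
    have := (Real.tendsto_exp_atBot.comp (exp_arg_tendsto_bot s)).const_mul (1/2 : ℝ)
    simpa using this
  exact squeeze_zero_norm (fun x => norm_g s x) hb

-- continuity of the exponential part
private lemma contE (s : ℂ) : Continuous (fun x : ℝ => Complex.exp (-2*((x:ℂ) - s)^2)) := by
  fun_prop

private lemma integrable_fprime (s : ℂ) :
    Integrable (fun x : ℝ => 2*((x:ℂ)-s) * Complex.exp (-2*((x:ℂ)-s)^2)) := by
  set c : ℝ := max 1 ‖s‖ with hc
  have hc1 : 1 ≤ c := le_max_left _ _
  have hsc : ‖s‖ ≤ c := le_max_right _ _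
  apply Integrable.mono' (integrable_bound ((2 + 2*c) * Real.exp (10*c^2)))
  · apply Continuous.aestronglyMeasurable
    fun_prop
  · refine Filter.Eventually.of_forall (fun x => ?_)
    rw [norm_mul]
    have h1 : ‖(2:ℂ)*((x:ℂ)-s)‖ = 2*‖(x:ℂ)-s‖ := by
      rw [norm_mul]; norm_num
    rw [h1, mul_assoc]
    calc 2*(‖(x:ℂ)-s‖ * ‖Complex.exp (-2*((x:ℂ)-s)^2)‖)
        = (2*‖(x:ℂ)-s‖) * ‖Complex.exp (-2*((x:ℂ)-s)^2)‖ := by ring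
      _ ≤ (2 + 2*c) * Real.exp (10*c^2) * Real.exp (-x^2) := key_bound hc1 hsc x
  
private lemma aesm_F (z : ℂ) :
    AEStronglyMeasurable (fun x : ℝ =>
      (-Complex.I*(Real.sign x:ℂ)) * Complex.exp (-2*((x:ℂ) - Complex.I/2*z)^2)) volume := by
  apply Measurable.aestronglyMeasurable
  exact ((Complex.measurable_ofReal.comp measurable_realSign).const_mul (-Complex.I)).mul
    (contE (Complex.I/2*z)).measurable

private lemma aesm_F' (z : ℂ) :
    AEStronglyMeasurable (fun x : ℝ =>
      (-Complex.I*(Real.sign x:ℂ)) * Complex.exp (-2*((x:ℂ) - Complex.I/2*z)^2)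
        * (2*Complex.I*((x:ℂ) - Complex.I/2*z))) volume := by
  apply Measurable.aestronglyMeasurable
  apply Measurable.mul
  · exact ((Complex.measurable_ofReal.comp measurable_realSign).const_mul (-Complex.I)).mul
      (contE (Complex.I/2*z)).measurable
  · fun_prop

private lemma norm_F_le (z : ℂ) (x : ℝ) :
    ‖(-Complex.I*(Real.sign x:ℂ)) * Complex.exp (-2*((x:ℂ) - Complex.I/2*z)^2)‖
      ≤ ‖Complex.exp (-2*((x:ℂ) - Complex.I/2*z)^2)‖ := by
  rw [norm_mul]
  have h1 : ‖-Complex.I*(Real.sign x:ℂ)‖ ≤ 1 := by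
    rw [norm_mul]
    simp [Complex.norm_real, Real.norm_eq_abs]
    exact abs_sign_le x
  nlinarith [norm_nonneg (Complex.exp (-2*((x:ℂ) - Complex.I/2*z)^2)), h1,
    norm_nonneg (-Complex.I*(Real.sign x:ℂ))]

private lemma norm_F'_le (z : ℂ) (x : ℝ) :
    ‖(-Complex.I*(Real.sign x:ℂ)) * Complex.exp (-2*((x:ℂ) - Complex.I/2*z)^2)
        * (2*Complex.I*((x:ℂ) - Complex.I/2*z))‖
      ≤ (2*‖(x:ℂ) - Complex.I/2*z‖) * ‖Complex.exp (-2*((x:ℂ) - Complex.I/2*z)^2)‖ := by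
  rw [norm_mul]
  have h2 : ‖(2:ℂ)*Complex.I*((x:ℂ) - Complex.I/2*z)‖ = 2*‖(x:ℂ) - Complex.I/2*z‖ := by
    rw [norm_mul, norm_mul]; simp
  rw [h2]
  have := norm_F_le z x
  nlinarith [norm_nonneg ((x:ℂ) - Complex.I/2*z), norm_nonneg (Complex.exp (-2*((x:ℂ) - Complex.I/2*z)^2))]

private lemma integrable_F (z : ℂ) :
    Integrable (fun x : ℝ =>
      (-Complex.I*(Real.sign x:ℂ)) * Complex.exp (-2*((x:ℂ) - Complex.I/2*z)^2)) := by
  set s : ℂ := Complex.I/2*z with hs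
  set c : ℝ := max 1 ‖s‖ with hc
  have hc1 : 1 ≤ c := le_max_left _ _
  have hsc : ‖s‖ ≤ c := le_max_right _ _
  apply Integrable.mono' (integrable_bound ((2 + 2*c) * Real.exp (10*c^2))) (aesm_F z)
  refine Filter.Eventually.of_forall (fun x => ?_)
  exact (norm_F_le z x).trans (key_bound' hc1 hsc x)

private lemma ae_ne_zero : ∀ᵐ x : ℝ, x ≠ 0 := by
  refine ae_iff.2 ?_
  simp only [ne_eq, not_not]
  have : {x : ℝ | x = 0} = {0} := by ext x; simp
  rw [this]
  exact Real.volume_singleton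

-- the value of the integral of the z-derivative
private lemma integral_deriv (z : ℂ) :
    ∫ x : ℝ, (-Complex.I*(Real.sign x:ℂ)) * Complex.exp (-2*((x:ℂ) - Complex.I/2*z)^2)
      * (2*Complex.I*((x:ℂ) - Complex.I/2*z)) = Complex.exp (z^2/2) := by
  set s : ℂ := Complex.I/2*z with hs
  set F' : ℝ → ℂ := fun x => (-Complex.I*(Real.sign x:ℂ)) * Complex.exp (-2*((x:ℂ) - s)^2)
      * (2*Complex.I*((x:ℂ) - s)) with hF'
  set f' : ℝ → ℂ := fun x => 2*((x:ℂ)-s) * Complex.exp (-2*((x:ℂ)-s)^2) with hf'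
  set g : ℝ → ℂ := fun x => -(1/2) * Complex.exp (-2*((x:ℂ) - s)^2) with hg
  have hint : Integrable f' := integrable_fprime s
  -- integrability of F'
  have hintF' : Integrable F' := by
    set c : ℝ := max 1 ‖s‖ with hc
    have hc1 : 1 ≤ c := le_max_left _ _
    have hsc : ‖s‖ ≤ c := le_max_right _ _
    apply Integrable.mono' (integrable_bound ((2 + 2*c) * Real.exp (10*c^2))) (aesm_F' z)
    exact Filter.Eventually.of_forall (fun x => (norm_F'_le z x).trans (key_bound hc1 hsc x))
  -- FTC on the two half-lines
  have hIoi : ∫ x in Ioi (0:ℝ), f' x = 0 - g 0 :=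
    integral_Ioi_of_hasDerivAt_of_tendsto' (fun x _ => hasDeriv_g s x)
      hint.integrableOn (tendsto_g_top s)
  have hIic : ∫ x in Iic (0:ℝ), f' x = g 0 - 0 :=
    integral_Iic_of_hasDerivAt_of_tendsto' (fun x _ => hasDeriv_g s x)
      hint.integrableOn (tendsto_g_bot s)
  -- identify F' with ±f' on the half-lines
  have e1 : ∫ x in Ioi (0:ℝ), F' x = ∫ x in Ioi (0:ℝ), f' x := by
    apply setIntegral_congr_fun measurableSet_Ioi
    intro x hx
    simp only [hF', hf', Real.sign_of_pos (mem_Ioi.1 hx), Complex.ofReal_one]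
    ring_nf
    rw [Complex.I_sq]
    ring
  have e2 : ∫ x in Iic (0:ℝ), F' x = ∫ x in Iic (0:ℝ), -(f' x) := by
    apply setIntegral_congr_ae measurableSet_Iic
    filter_upwards [ae_ne_zero] with x hx hmem
    have hneg : x < 0 := lt_of_le_of_ne (mem_Iic.1 hmem) hx
    simp only [hF', hf', Real.sign_of_neg hneg]
    push_cast
    ring_nf
    rw [Complex.I_sq]
    ring
  have split := intervalIntegral.integral_Iic_add_Ioi (b := (0:ℝ)) hintF'.integrableOn hintF'.integrableOn
  rw [e1, e2] at split
  rw [integral_neg] at split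
  have hval : (∫ x : ℝ, F' x) = -(g 0) + (0 - g 0) := by
    rw [← split, hIic, hIoi]
    ring_nf
  rw [hval]
  have hg0 : g 0 = -(1/2) * Complex.exp (z^2/2) := by
    simp only [hg, hs]
    norm_num
    congr 1
    ring_nf
    rw [Complex.I_sq]
    ring
  rw [hg0]
  ring

private lemma key_deriv (z₀ : ℂ) :
    HasDerivAt (fun z : ℂ => ∫ x : ℝ,
        (-Complex.I * (Real.sign x : ℂ)) * Complex.exp (-2 * ((x : ℂ) - Complex.I / 2 * z) ^ 2))
      (Complex.exp (z₀^2/2)) z₀ := by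
  set c : ℝ := max 1 ((‖z₀‖ + 1)/2) with hcdef
  have hc1 : 1 ≤ c := le_max_left _ _
  have hsball : ∀ z ∈ ball z₀ 1, ‖Complex.I/2*z‖ ≤ c := by
    intro z hz
    have h1 : ‖z‖ ≤ ‖z₀‖ + 1 := by
      have h2 := mem_ball_iff_norm.1 hz
      calc ‖z‖ = ‖z₀ + (z - z₀)‖ := by ring_nf
        _ ≤ ‖z₀‖ + ‖z - z₀‖ := norm_add_le _ _
        _ ≤ ‖z₀‖ + 1 := by linarith
    have h3 : ‖Complex.I/2*z‖ = (1/2) * ‖z‖ := by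
      rw [norm_mul]
      congr 1
      simp [norm_div, Complex.norm_I]
    rw [h3]
    calc (1/2) * ‖z‖ ≤ (1/2) * (‖z₀‖ + 1) := by linarith [norm_nonneg z]
      _ = (‖z₀‖ + 1)/2 := by ring
      _ ≤ c := le_max_right _ _
  have h := hasDerivAt_integral_of_dominated_loc_of_deriv_le (μ := volume)
    (F := fun z (x : ℝ) => (-Complex.I * (Real.sign x : ℂ))
      * Complex.exp (-2 * ((x : ℂ) - Complex.I / 2 * z) ^ 2))
    (F' := fun z (x : ℝ) => (-Complex.I * (Real.sign x : ℂ))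
      * Complex.exp (-2 * ((x : ℂ) - Complex.I / 2 * z) ^ 2)
      * (2*Complex.I*((x:ℂ) - Complex.I/2*z)))
    (bound := fun x => (2 + 2*c) * Real.exp (10*c^2) * Real.exp (-x^2))
    (ball_mem_nhds z₀ one_pos)
    (Filter.Eventually.of_forall (fun z => aesm_F z))
    (integrable_F z₀)
    (aesm_F' z₀)
    (Filter.Eventually.of_forall (fun x => fun z hz =>
      (norm_F'_le z x).trans (key_bound hc1 (hsball z hz) x)))
    (integrable_bound _)
    (Filter.Eventually.of_forall (fun x => fun z _ => hasDeriv_in_z x z))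
  have h2 := h.2
  rwa [integral_deriv z₀] at h2

-- value at zero
private lemma integral_zero_val :
    ∫ x : ℝ, (-Complex.I*(Real.sign x:ℂ)) * Complex.exp (-2*((x:ℂ) - Complex.I/2*(0:ℂ))^2) = 0 := by
  set f : ℝ → ℂ := fun x => (-Complex.I*(Real.sign x:ℂ)) * Complex.exp (-2*((x:ℂ) - Complex.I/2*(0:ℂ))^2) with hf
  have hodd : ∀ x : ℝ, f (-x) = -f x := by
    intro x
    simp only [hf]
    rw [Real.sign_neg]
    push_cast
    ring_nf
  have h1 : ∫ x : ℝ, f (-x) = ∫ x : ℝ, f x := integral_neg_eq_self f volume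
  have h2 : ∫ x : ℝ, f (-x) = -∫ x : ℝ, f x := by
    rw [show (fun x : ℝ => f (-x)) = fun x : ℝ => -f x from funext hodd]
    exact integral_neg f
  have h4 : (∫ x : ℝ, f x) = -∫ x : ℝ, f x := h1.symm.trans h2
  linear_combination h4 / 2

private lemma A_inner_deriv (z₀ : ℂ) :
    HasDerivAt (fun z : ℂ => ∫ t in (0:ℝ)..1, Complex.exp (((t:ℂ)*z)^2))
      (∫ t in (0:ℝ)..1, 2*(t:ℂ)^2*z₀ * Complex.exp (((t:ℂ)*z₀)^2)) z₀ := by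
  set c : ℝ := ‖z₀‖ + 1 with hc
  have hzb : ∀ z ∈ ball z₀ 1, ‖z‖ ≤ c := by
    intro z hz
    have h2 := mem_ball_iff_norm.1 hz
    calc ‖z‖ = ‖z₀ + (z - z₀)‖ := by ring_nf
      _ ≤ ‖z₀‖ + ‖z - z₀‖ := norm_add_le _ _
      _ ≤ c := by rw [hc]; linarith
  have hder : ∀ t : ℝ, ∀ z : ℂ, HasDerivAt (fun z : ℂ => Complex.exp (((t:ℂ)*z)^2))
      (2*(t:ℂ)^2*z * Complex.exp (((t:ℂ)*z)^2)) z := by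
    intro t z
    have h1 := (((hasDerivAt_id z).const_mul (t:ℂ)).pow 2).cexp
    refine h1.congr_deriv ?_
    simp only [Pi.pow_apply, id_eq, Nat.cast_ofNat, show (2:ℕ) - 1 = 1 from rfl, pow_one]
    ring
  have key := intervalIntegral.hasDerivAt_integral_of_dominated_loc_of_deriv_le
    (μ := volume) (a := (0:ℝ)) (b := 1) (x₀ := z₀)
    (F := fun z (t : ℝ) => Complex.exp (((t:ℂ)*z)^2))
    (F' := fun z (t : ℝ) => 2*(t:ℂ)^2*z * Complex.exp (((t:ℂ)*z)^2))
    (bound := fun _ => 2*c*Real.exp (c^2)) (ball_mem_nhds z₀ one_pos)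
    (Filter.Eventually.of_forall (fun z => (Continuous.aestronglyMeasurable (by fun_prop))))
    (Continuous.intervalIntegrable (by fun_prop) _ _)
    (Continuous.aestronglyMeasurable (by fun_prop))
    ?_ (intervalIntegrable_const) 
    (Filter.Eventually.of_forall (fun t _ z _ => hder t z))
  · exact key.2
  · refine Filter.Eventually.of_forall (fun t ht z hz => ?_)
    have ht1 : t ∈ Set.Ioc (0:ℝ) 1 := by
      simpa [Set.uIoc_of_le (show (0:ℝ) ≤ 1 by norm_num)] using ht
    have htabs : |t| ≤ 1 := by
      rw [abs_of_pos ht1.1]; exact ht1.2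
    have hznorm : ‖z‖ ≤ c := hzb z hz
    have hrm : ‖Complex.exp (((t:ℂ)*z)^2)‖ ≤ Real.exp (c^2) := by
      rw [Complex.norm_exp]
      apply Real.exp_le_exp.2
      calc (((t:ℂ)*z)^2).re ≤ ‖((t:ℂ)*z)^2‖ := Complex.re_le_norm _
        _ = (‖(t:ℂ)*z‖)^2 := by rw [norm_pow]
        _ = (|t| * ‖z‖)^2 := by rw [norm_mul, Complex.norm_real, Real.norm_eq_abs]
        _ ≤ (1 * c)^2 := by
            apply pow_le_pow_left₀ (by positivity)
            apply mul_le_mul htabs ?_ (by positivity) (by norm_num)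
            exact hznorm
        _ = c^2 := by ring
    calc ‖2*(t:ℂ)^2*z * Complex.exp (((t:ℂ)*z)^2)‖
        = 2*|t|^2*‖z‖*‖Complex.exp (((t:ℂ)*z)^2)‖ := by
          rw [norm_mul, norm_mul, norm_mul]
          simp [Complex.norm_real, Real.norm_eq_abs, abs_pow]
      _ ≤ 2*1*c*Real.exp (c^2) := by
          have h0 : (0:ℝ) ≤ ‖z‖ := norm_nonneg z
          have h1 : |t|^2 ≤ 1 := by nlinarith [abs_nonneg t]
          have h3 : (0:ℝ) ≤ ‖Complex.exp (((t:ℂ)*z)^2)‖ := norm_nonneg _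
          have hZE : ‖z‖ * ‖Complex.exp (((t:ℂ)*z)^2)‖ ≤ c * Real.exp (c^2) :=
            mul_le_mul hznorm hrm h3 (by positivity)
          nlinarith [mul_nonneg h0 h3]
      _ = 2*c*Real.exp (c^2) := by ring

private lemma A_deriv (z₀ : ℂ) :
    HasDerivAt (fun z : ℂ => z * ∫ t in (0:ℝ)..1, Complex.exp (((t:ℂ)*z)^2))
      (Complex.exp (z₀^2)) z₀ := by
  have h1 := (hasDerivAt_id z₀).mul (A_inner_deriv z₀)
  -- deriv : 1 * ∫ F z₀ + z₀ * ∫ F'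
  have h2 : (1:ℂ) * (∫ t in (0:ℝ)..1, Complex.exp (((t:ℂ)*z₀)^2))
      + z₀ * ∫ t in (0:ℝ)..1, 2*(t:ℂ)^2*z₀ * Complex.exp (((t:ℂ)*z₀)^2)
      = Complex.exp (z₀^2) := by
    rw [one_mul, ← intervalIntegral.integral_const_mul]
    have hcont1 : Continuous (fun t : ℝ => Complex.exp (((t:ℂ)*z₀)^2)) := by fun_prop
    have hcont2 : Continuous (fun t : ℝ => z₀ * (2*(t:ℂ)^2*z₀ * Complex.exp (((t:ℂ)*z₀)^2))) := by
      fun_prop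
    rw [← intervalIntegral.integral_add (hcont1.intervalIntegrable _ _)
      (hcont2.intervalIntegrable _ _)]
    -- FTC for t ↦ t * exp((t z₀)^2)
    have hftc : ∀ t : ℝ, HasDerivAt (fun t : ℝ => (t:ℂ) * Complex.exp (((t:ℂ)*z₀)^2))
        (Complex.exp (((t:ℂ)*z₀)^2) + z₀ * (2*(t:ℂ)^2*z₀ * Complex.exp (((t:ℂ)*z₀)^2))) t := by
      intro t
      have hG : HasDerivAt (fun u : ℂ => u * Complex.exp ((u*z₀)^2))
          (Complex.exp (((t:ℂ)*z₀)^2) + z₀ * (2*(t:ℂ)^2*z₀ * Complex.exp (((t:ℂ)*z₀)^2))) (t:ℂ) := by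
        have hg1 := (hasDerivAt_id ((t:ℂ))).mul_const z₀
        have hg2 := (hg1.pow 2).cexp
        have hg3 := (hasDerivAt_id ((t:ℂ))).mul hg2
        refine hg3.congr_deriv ?_
        simp only [Pi.pow_apply, id_eq, Nat.cast_ofNat, show (2:ℕ) - 1 = 1 from rfl, pow_one]
        ring
      exact hG.comp_ofReal
    have := intervalIntegral.integral_eq_sub_of_hasDerivAt
      (a := (0:ℝ)) (b := 1)
      (f := fun t : ℝ => (t:ℂ) * Complex.exp (((t:ℂ)*z₀)^2))
      (fun t _ => hftc t)
      (Continuous.intervalIntegrable (by fun_prop) _ _)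
    rw [this]
    push_cast
    simp
  simp only [id_eq] at h1
  rw [h2] at h1
  exact h1

theorem hilbert_symbol (φ A : ℂ → ℂ)
    (hφ : ∀ z : ℂ, φ z = ((Real.sqrt (2 / Real.pi) : ℝ) : ℂ) *
      ∫ x : ℝ, (-Complex.I * (Real.sign x : ℂ))
        * Complex.exp (-2 * ((x : ℂ) - Complex.I / 2 * z) ^ 2))
    (hA : ∀ z : ℂ, A z = z * ∫ t in (0:ℝ)..1, Complex.exp (((t : ℂ) * z) ^ 2)) :
    (∀ z : ℂ, HasDerivAt φ (((Real.sqrt (2 / Real.pi) : ℝ) : ℂ)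
        * Complex.exp (z ^ 2 / 2)) z)
      ∧ φ 0 = 0
      ∧ ∀ z : ℂ, φ z = (2 / ((Real.sqrt Real.pi : ℝ) : ℂ))
          * A (z / ((Real.sqrt 2 : ℝ) : ℂ)) := by
  have hφfun : φ = fun z => ((Real.sqrt (2 / Real.pi) : ℝ) : ℂ) *
      ∫ x : ℝ, (-Complex.I * (Real.sign x : ℂ))
        * Complex.exp (-2 * ((x : ℂ) - Complex.I / 2 * z) ^ 2) := funext hφ
  -- sqrt facts
  have hpi_pos : (0:ℝ) < Real.pi := Real.pi_pos
  have hsqrtpi_pos : (0:ℝ) < Real.sqrt Real.pi := Real.sqrt_pos.2 hpi_pos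
  have hsqrt2_pos : (0:ℝ) < Real.sqrt 2 := Real.sqrt_pos.2 (by norm_num)
  have hs2 : Real.sqrt 2 * Real.sqrt 2 = 2 := Real.mul_self_sqrt (by norm_num)
  have hcr : Real.sqrt (2 / Real.pi) = 2 / Real.sqrt Real.pi * (1 / Real.sqrt 2) := by
    rw [Real.sqrt_div (by norm_num : (0:ℝ) ≤ 2) Real.pi]
    field_simp
    nlinarith [hs2, hsqrtpi_pos]
  -- part 1 : derivative of φ
  have hφd : ∀ z : ℂ, HasDerivAt φ (((Real.sqrt (2 / Real.pi) : ℝ) : ℂ)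
      * Complex.exp (z ^ 2 / 2)) z := by
    intro z
    rw [hφfun]
    exact (key_deriv z).const_mul _
  -- part 2 : value at zero
  have hφ0 : φ 0 = 0 := by
    rw [hφ 0, integral_zero_val, mul_zero]
  -- part 3 : the formula
  refine ⟨hφd, hφ0, ?_⟩
  set F : ℂ → ℂ := fun z => (2 / ((Real.sqrt Real.pi : ℝ) : ℂ))
      * A (z / ((Real.sqrt 2 : ℝ) : ℂ)) with hFdef
  have hA0 : A 0 = 0 := by rw [hA 0]; simp
  have hF0 : F 0 = 0 := by
    rw [hFdef]
    simp only [zero_div, hA0, mul_zero]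
  have hs2c : ((Real.sqrt 2 : ℝ) : ℂ) ^ 2 = 2 := by
    rw [← Complex.ofReal_pow]
    norm_cast
    rw [pow_two]
    exact hs2
  have hs2ne : ((Real.sqrt 2 : ℝ) : ℂ) ≠ 0 := by
    simpa using hsqrt2_pos.ne'
  have hAd : ∀ w : ℂ, HasDerivAt A (Complex.exp (w ^ 2)) w := by
    intro w
    rw [funext hA]
    exact A_deriv w
  have hFd : ∀ z : ℂ, HasDerivAt F (((Real.sqrt (2 / Real.pi) : ℝ) : ℂ)
      * Complex.exp (z ^ 2 / 2)) z := by
    intro z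
    have hinner : HasDerivAt (fun z : ℂ => z / ((Real.sqrt 2 : ℝ) : ℂ))
        (1 / ((Real.sqrt 2 : ℝ) : ℂ)) z := by
      simpa using (hasDerivAt_id z).div_const ((Real.sqrt 2 : ℝ) : ℂ)
    have hcomp := (hAd (z / ((Real.sqrt 2 : ℝ) : ℂ))).comp z hinner
    have hmul := hcomp.const_mul ((2:ℂ) / ((Real.sqrt Real.pi : ℝ) : ℂ))
    have harg : (z / ((Real.sqrt 2 : ℝ) : ℂ)) ^ 2 = z ^ 2 / 2 := by
      rw [div_pow, hs2c]
    have hconst : ((2:ℂ) / ((Real.sqrt Real.pi : ℝ) : ℂ))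
        * (Complex.exp (z ^ 2 / 2) * (1 / ((Real.sqrt 2 : ℝ) : ℂ)))
        = ((Real.sqrt (2 / Real.pi) : ℝ) : ℂ) * Complex.exp (z ^ 2 / 2) := by
      rw [hcr]
      push_cast
      ring
    have : HasDerivAt F (((2:ℂ) / ((Real.sqrt Real.pi : ℝ) : ℂ))
        * (Complex.exp (z ^ 2 / 2) * (1 / ((Real.sqrt 2 : ℝ) : ℂ)))) z := by
      rw [hFdef]
      rw [harg] at hmul
      exact hmul
    rwa [hconst] at this
  -- constancy of φ - F
  have hD : ∀ z : ℂ, HasDerivAt (fun z => φ z - F z) 0 z := by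
    intro z
    have h := (hφd z).sub (hFd z)
    rw [sub_self] at h
    exact h
  have hdiff : Differentiable ℂ (fun z => φ z - F z) :=
    fun z => (hD z).differentiableAt
  have hf0 : ∀ z : ℂ, fderiv ℂ (fun z => φ z - F z) z = 0 := by
    intro z
    have h1 := (hD z).hasFDerivAt.fderiv
    rw [h1]
    ext w
    simp
  intro z
  have hconst := is_const_of_fderiv_eq_zero hdiff hf0 z 0
  have : φ z - F z = φ 0 - F 0 := hconst
  rw [hφ0, hF0] at this
  have : φ z = F z := by linear_combination this
  exact this
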